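/- Let 1 < p < N be real numbers, set κ := (N − p)/(p − 1) > 0, let F be a norm on ℝ^N with dual norm F°, and define u(x) := F°(x)^{−κ} for x ≠ 0. Then at every point x ∈ ℝ^N \ {0} where F° is (Fréchet) differentiable: (i) u is differentiable at x with ∇u(x) = −κ F°(x)^{−κ−1} ∇F°(x); (ii) F(∇u(x)) = κ F°(x)^{−(N−1)/(p−1)}; (iii) the vector −x/F°(x) is a subgradient of F at ∇u(x); and (iv) F(∇u(x))^{p−1} · (−x/F°(x)) = −κ^{p−1} F°(x)^{−N} · x, i.e. the flux field F^{p−1}(∇u) ∂F(∇u) coincides with the divergence-free field −κ^{p−1} F°(y)^{−N} y. -/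

import Mathlib

open scoped RealInnerProductSpace

/-- The dual (polar) norm `F°(ξ) = sup { ξ · y : F(y) ≤ 1 }` of `F`. -/
noncomputable def polar {N : ℕ} (F : EuclideanSpace ℝ (Fin N) → ℝ)
    (ξ : EuclideanSpace ℝ (Fin N)) : ℝ :=
  sSup ((fun y => (inner ℝ ξ y : ℝ)) '' {y | F y ≤ 1})

open Set Filter Topology

section Aux
variable {N : ℕ} {F : EuclideanSpace ℝ (Fin N) → ℝ}

lemma myF_zero (hF_smul : ∀ (a : ℝ) x, F (a • x) = |a| * F x) : F 0 = 0 := by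
  simpa using hF_smul 0 0

lemma myF_neg (hF_smul : ∀ (a : ℝ) x, F (a • x) = |a| * F x) (x : EuclideanSpace ℝ (Fin N)) :
    F (-x) = F x := by
  have := hF_smul (-1) x; simpa using this

lemma myF_nonneg (hF_add : ∀ x y, F (x + y) ≤ F x + F y)
    (hF_smul : ∀ (a : ℝ) x, F (a • x) = |a| * F x) (x : EuclideanSpace ℝ (Fin N)) :
    0 ≤ F x := by
  have h := hF_add x (-x)
  rw [add_neg_cancel, myF_zero hF_smul, myF_neg hF_smul] at h
  linarith

lemma myF_sum_le (hF_add : ∀ x y, F (x + y) ≤ F x + F y)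
    (hF_smul : ∀ (a : ℝ) x, F (a • x) = |a| * F x)
    {ι : Type*} (s : Finset ι) (g : ι → EuclideanSpace ℝ (Fin N)) :
    F (∑ i ∈ s, g i) ≤ ∑ i ∈ s, F (g i) := by
  classical
  induction s using Finset.induction_on with
  | empty => simp [myF_zero hF_smul]
  | insert _ _ h ih =>
    rw [Finset.sum_insert h, Finset.sum_insert h]
    exact le_trans (hF_add _ _) (by linarith)

lemma myF_bound (hF_add : ∀ x y, F (x + y) ≤ F x + F y)
    (hF_smul : ∀ (a : ℝ) x, F (a • x) = |a| * F x) :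
    ∃ C : ℝ, 0 < C ∧ ∀ x, F x ≤ C * ‖x‖ := by
  classical
  set C₀ : ℝ := ∑ i, F (EuclideanSpace.single i (1:ℝ)) with hC₀
  have hC₀0 : 0 ≤ C₀ := Finset.sum_nonneg fun i _ => myF_nonneg hF_add hF_smul _
  refine ⟨C₀ + 1, by linarith, fun x => ?_⟩
  have hx : ∑ i, (x i) • EuclideanSpace.single i (1:ℝ) = x := by
    simpa [EuclideanSpace.basisFun_apply, EuclideanSpace.basisFun_repr] using
      (EuclideanSpace.basisFun (Fin N) ℝ).sum_repr x
  have hcoord : ∀ i, |x i| ≤ ‖x‖ := by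
    intro i
    have h1 : (inner ℝ (EuclideanSpace.single i (1:ℝ)) x : ℝ) = x i := by
      simp [EuclideanSpace.inner_single_left]
    have h2 := abs_real_inner_le_norm (EuclideanSpace.single i (1:ℝ)) x
    rw [h1, EuclideanSpace.norm_single] at h2
    simpa using h2
  calc F x = F (∑ i, (x i) • EuclideanSpace.single i (1:ℝ)) := by rw [hx]
    _ ≤ ∑ i, F ((x i) • EuclideanSpace.single i (1:ℝ)) := myF_sum_le hF_add hF_smul _ _
    _ = ∑ i, |x i| * F (EuclideanSpace.single i (1:ℝ)) := by
        simp [hF_smul]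
    _ ≤ ∑ i, ‖x‖ * F (EuclideanSpace.single i (1:ℝ)) := by
        refine Finset.sum_le_sum fun i _ => ?_
        exact mul_le_mul_of_nonneg_right (hcoord i) (myF_nonneg hF_add hF_smul _)
    _ = C₀ * ‖x‖ := by rw [← Finset.mul_sum, hC₀]; ring
    _ ≤ (C₀ + 1) * ‖x‖ := by nlinarith [norm_nonneg x]

lemma myF_continuous (hF_add : ∀ x y, F (x + y) ≤ F x + F y)
    (hF_smul : ∀ (a : ℝ) x, F (a • x) = |a| * F x) : Continuous F := by
  obtain ⟨C, hC, hbd⟩ := myF_bound hF_add hF_smul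
  have key : ∀ x y : EuclideanSpace ℝ (Fin N), F x - F y ≤ C * ‖x - y‖ := by
    intro x y
    have h := hF_add (x - y) y
    rw [sub_add_cancel] at h
    have := hbd (x - y)
    linarith
  refine (LipschitzWith.of_dist_le_mul (K := C.toNNReal) fun x y => ?_).continuous
  rw [Real.dist_eq, abs_sub_le_iff, dist_eq_norm]
  have h1 := key x y
  have h2 := key y x
  rw [norm_sub_rev y x] at h2
  constructor <;> rw [Real.coe_toNNReal _ hC.le] <;> linarith

lemma myF_lower (hN : 0 < N) (hF_add : ∀ x y, F (x + y) ≤ F x + F y)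
    (hF_smul : ∀ (a : ℝ) x, F (a • x) = |a| * F x)
    (hF_pos : ∀ x, x ≠ 0 → 0 < F x) :
    ∃ c : ℝ, 0 < c ∧ ∀ x, c * ‖x‖ ≤ F x := by
  have hy0 : (EuclideanSpace.single (⟨0, hN⟩ : Fin N) (1:ℝ)) ∈ Metric.sphere (0 : EuclideanSpace ℝ (Fin N)) 1 := by
    simp [EuclideanSpace.norm_single]
  obtain ⟨z, hz, hzmin⟩ := (isCompact_sphere (0 : EuclideanSpace ℝ (Fin N)) 1).exists_isMinOn
    ⟨_, hy0⟩ (myF_continuous hF_add hF_smul).continuousOn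
  have hz1 : ‖z‖ = 1 := by simpa using hz
  have hzne : z ≠ 0 := by intro h; rw [h] at hz1; simp at hz1
  refine ⟨F z, hF_pos z hzne, fun x => ?_⟩
  rcases eq_or_ne x 0 with rfl | hx
  · simp [myF_zero hF_smul]
  · have hxn : ‖x‖ ≠ 0 := norm_ne_zero_iff.mpr hx
    have hmem : ‖x‖⁻¹ • x ∈ Metric.sphere (0 : EuclideanSpace ℝ (Fin N)) 1 := by
      simp [norm_smul, abs_inv, abs_norm, inv_mul_cancel₀ hxn]
    have h1 := hzmin hmem
    have h2 : F x = ‖x‖ * F (‖x‖⁻¹ • x) := by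
      have := hF_smul ‖x‖ (‖x‖⁻¹ • x)
      rw [smul_smul, mul_inv_cancel₀ hxn, one_smul, abs_norm] at this
      exact this
    rw [h2]
    have hxpos : (0:ℝ) < ‖x‖ := (norm_pos_iff).mpr hx
    calc F z * ‖x‖ ≤ F (‖x‖⁻¹ • x) * ‖x‖ := by
          exact mul_le_mul_of_nonneg_right h1 hxpos.le
      _ = ‖x‖ * F (‖x‖⁻¹ • x) := by ring

end Aux

section Polar
variable {N : ℕ} {F : EuclideanSpace ℝ (Fin N) → ℝ}

lemma polar_bddAbove (hN : 0 < N) (hF_add : ∀ x y, F (x + y) ≤ F x + F y)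
    (hF_smul : ∀ (a : ℝ) x, F (a • x) = |a| * F x)
    (hF_pos : ∀ x, x ≠ 0 → 0 < F x) (ξ : EuclideanSpace ℝ (Fin N)) :
    BddAbove ((fun y => (inner ℝ ξ y : ℝ)) '' {y | F y ≤ 1}) := by
  obtain ⟨c, hc, hlow⟩ := myF_lower hN hF_add hF_smul hF_pos
  refine ⟨‖ξ‖ * (1 / c), ?_⟩
  rintro _ ⟨y, hy, rfl⟩
  have h1 : ‖y‖ ≤ 1 / c := by
    rw [le_div_iff₀ hc]
    calc ‖y‖ * c = c * ‖y‖ := mul_comm _ _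
      _ ≤ F y := hlow y
      _ ≤ 1 := hy
  calc (inner ℝ ξ y : ℝ) ≤ ‖ξ‖ * ‖y‖ := real_inner_le_norm ξ y
    _ ≤ ‖ξ‖ * (1 / c) := mul_le_mul_of_nonneg_left h1 (norm_nonneg ξ)

lemma polar_img_nonempty (hF_smul : ∀ (a : ℝ) x, F (a • x) = |a| * F x)
    (ξ : EuclideanSpace ℝ (Fin N)) :
    ((fun y => (inner ℝ ξ y : ℝ)) '' {y | F y ≤ 1}).Nonempty :=
  ⟨_, ⟨0, by simp [myF_zero hF_smul], rfl⟩⟩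

lemma inner_le_polar (hN : 0 < N) (hF_add : ∀ x y, F (x + y) ≤ F x + F y)
    (hF_smul : ∀ (a : ℝ) x, F (a • x) = |a| * F x)
    (hF_pos : ∀ x, x ≠ 0 → 0 < F x) {ξ y : EuclideanSpace ℝ (Fin N)} (hy : F y ≤ 1) :
    (inner ℝ ξ y : ℝ) ≤ polar F ξ :=
  le_csSup (polar_bddAbove hN hF_add hF_smul hF_pos ξ) ⟨y, hy, rfl⟩

lemma polar_le (hF_smul : ∀ (a : ℝ) x, F (a • x) = |a| * F x)
    {ξ : EuclideanSpace ℝ (Fin N)} {M : ℝ}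
    (h : ∀ y, F y ≤ 1 → (inner ℝ ξ y : ℝ) ≤ M) : polar F ξ ≤ M := by
  refine csSup_le (polar_img_nonempty hF_smul ξ) ?_
  rintro _ ⟨y, hy, rfl⟩
  exact h y hy

lemma polar_nonneg (hN : 0 < N) (hF_add : ∀ x y, F (x + y) ≤ F x + F y)
    (hF_smul : ∀ (a : ℝ) x, F (a • x) = |a| * F x)
    (hF_pos : ∀ x, x ≠ 0 → 0 < F x) (ξ : EuclideanSpace ℝ (Fin N)) :
    0 ≤ polar F ξ := by
  have h := inner_le_polar hN hF_add hF_smul hF_pos (ξ := ξ) (y := 0)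
    (by simp [myF_zero hF_smul])
  simpa using h

lemma inner_le_polar_mul (hN : 0 < N) (hF_add : ∀ x y, F (x + y) ≤ F x + F y)
    (hF_smul : ∀ (a : ℝ) x, F (a • x) = |a| * F x)
    (hF_pos : ∀ x, x ≠ 0 → 0 < F x) (ξ w : EuclideanSpace ℝ (Fin N)) :
    (inner ℝ ξ w : ℝ) ≤ polar F ξ * F w := by
  rcases eq_or_ne w 0 with rfl | hw
  · simp [myF_zero hF_smul]
  · have hFw : 0 < F w := hF_pos w hw
    have hy : F ((F w)⁻¹ • w) ≤ 1 := by
      rw [hF_smul, abs_inv, abs_of_pos hFw, inv_mul_cancel₀ hFw.ne']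
    have h := inner_le_polar hN hF_add hF_smul hF_pos (ξ := ξ) hy
    rw [real_inner_smul_right, inv_mul_le_iff₀ hFw] at h
    linarith [h, mul_comm (F w) (polar F ξ)]

lemma polar_smul_le (hN : 0 < N) (hF_add : ∀ x y, F (x + y) ≤ F x + F y)
    (hF_smul : ∀ (a : ℝ) x, F (a • x) = |a| * F x)
    (hF_pos : ∀ x, x ≠ 0 → 0 < F x) (a : ℝ) (ξ : EuclideanSpace ℝ (Fin N)) :
    polar F (a • ξ) ≤ |a| * polar F ξ := by
  refine polar_le hF_smul fun y hy => ?_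
  rw [real_inner_smul_left]
  rcases le_or_gt 0 a with ha | ha
  · rw [abs_of_nonneg ha]
    exact mul_le_mul_of_nonneg_left (inner_le_polar hN hF_add hF_smul hF_pos hy) ha
  · rw [abs_of_neg ha]
    have hy' : F (-y) ≤ 1 := by rw [myF_neg hF_smul]; exact hy
    have h := inner_le_polar hN hF_add hF_smul hF_pos (ξ := ξ) hy'
    rw [inner_neg_right] at h
    nlinarith

lemma polar_smul (hN : 0 < N) (hF_add : ∀ x y, F (x + y) ≤ F x + F y)
    (hF_smul : ∀ (a : ℝ) x, F (a • x) = |a| * F x)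
    (hF_pos : ∀ x, x ≠ 0 → 0 < F x) (a : ℝ) (ξ : EuclideanSpace ℝ (Fin N)) :
    polar F (a • ξ) = |a| * polar F ξ := by
  rcases eq_or_ne a 0 with rfl | ha
  · have h1 := polar_smul_le hN hF_add hF_smul hF_pos 0 ξ
    have h2 := polar_nonneg hN hF_add hF_smul hF_pos ((0:ℝ) • ξ)
    simp only [abs_zero, zero_mul] at h1 ⊢
    exact le_antisymm h1 h2
  · refine le_antisymm (polar_smul_le hN hF_add hF_smul hF_pos a ξ) ?_
    have h := polar_smul_le hN hF_add hF_smul hF_pos a⁻¹ (a • ξ)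
    rw [smul_smul, inv_mul_cancel₀ ha, one_smul, abs_inv] at h
    calc |a| * polar F ξ ≤ |a| * (|a|⁻¹ * polar F (a • ξ)) :=
          mul_le_mul_of_nonneg_left h (abs_nonneg a)
      _ = polar F (a • ξ) := by
          field_simp

lemma polar_add (hN : 0 < N) (hF_add : ∀ x y, F (x + y) ≤ F x + F y)
    (hF_smul : ∀ (a : ℝ) x, F (a • x) = |a| * F x)
    (hF_pos : ∀ x, x ≠ 0 → 0 < F x) (ξ η : EuclideanSpace ℝ (Fin N)) :
    polar F (ξ + η) ≤ polar F ξ + polar F η := by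
  refine polar_le hF_smul fun y hy => ?_
  rw [inner_add_left]
  exact add_le_add (inner_le_polar hN hF_add hF_smul hF_pos hy)
    (inner_le_polar hN hF_add hF_smul hF_pos hy)

lemma polar_pos (hN : 0 < N) (hF_add : ∀ x y, F (x + y) ≤ F x + F y)
    (hF_smul : ∀ (a : ℝ) x, F (a • x) = |a| * F x)
    (hF_pos : ∀ x, x ≠ 0 → 0 < F x) {x : EuclideanSpace ℝ (Fin N)} (hx : x ≠ 0) :
    0 < polar F x := by
  have hFx : 0 < F x := hF_pos x hx
  have hy : F ((F x)⁻¹ • x) ≤ 1 := by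
    rw [hF_smul, abs_inv, abs_of_pos hFx, inv_mul_cancel₀ hFx.ne']
  have h := inner_le_polar hN hF_add hF_smul hF_pos (ξ := x) hy
  rw [real_inner_smul_right, real_inner_self_eq_norm_sq] at h
  have : 0 < (F x)⁻¹ * ‖x‖ ^ 2 := mul_pos (inv_pos.mpr hFx) (pow_pos (norm_pos_iff.mpr hx) 2)
  linarith

lemma polar_comb (hN : 0 < N) (hF_add : ∀ x y, F (x + y) ≤ F x + F y)
    (hF_smul : ∀ (a : ℝ) x, F (a • x) = |a| * F x)
    (hF_pos : ∀ x, x ≠ 0 → 0 < F x) {a b : ℝ} (ha : 0 ≤ a) (hb : 0 ≤ b)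
    (ξ η : EuclideanSpace ℝ (Fin N)) :
    polar F (a • ξ + b • η) ≤ a * polar F ξ + b * polar F η := by
  refine le_trans (polar_add hN hF_add hF_smul hF_pos _ _) ?_
  rw [polar_smul hN hF_add hF_smul hF_pos, polar_smul hN hF_add hF_smul hF_pos,
    abs_of_nonneg ha, abs_of_nonneg hb]

end Polar

section Calc
variable {N : ℕ} {F : EuclideanSpace ℝ (Fin N) → ℝ}

lemma polar_subgrad (hN : 0 < N) (hF_add : ∀ x y, F (x + y) ≤ F x + F y)
    (hF_smul : ∀ (a : ℝ) x, F (a • x) = |a| * F x)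
    (hF_pos : ∀ x, x ≠ 0 → 0 < F x)
    {x : EuclideanSpace ℝ (Fin N)} {φ : EuclideanSpace ℝ (Fin N) →L[ℝ] ℝ}
    (hd : HasFDerivAt (polar F) φ x) (v : EuclideanSpace ℝ (Fin N)) :
    φ v ≤ polar F (x + v) - polar F x := by
  set g : ℝ → ℝ := fun t => polar F (x + t • v) with hg
  have hline : HasDerivAt (fun t : ℝ => x + t • v) v 0 := by
    simpa using ((hasDerivAt_id (0 : ℝ)).smul_const v).const_add x
  have hcomp : HasDerivAt g (φ v) 0 :=
    hd.comp_hasDerivAt_of_eq 0 hline (by simp)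
  have hslope : Filter.Tendsto (slope g 0) (nhdsWithin 0 (Set.Ioi 0)) (nhds (φ v)) :=
    (hasDerivAt_iff_tendsto_slope.mp hcomp).mono_left
      (nhdsWithin_mono 0 fun t ht => ne_of_gt ht)
  refine le_of_tendsto hslope ?_
  filter_upwards [Ioo_mem_nhdsGT_of_mem (Set.left_mem_Ico.mpr one_pos)] with t ht
  have hcv : polar F (x + t • v) ≤ (1 - t) * polar F x + t * polar F (x + v) := by
    have h := polar_comb hN hF_add hF_smul hF_pos (a := 1 - t) (b := t)
      (by linarith [ht.2]) ht.1.le x (x + v)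
    have heq : (1 - t) • x + t • (x + v) = x + t • v := by module
    rwa [heq] at h
  have hg0 : g 0 = polar F x := by simp [hg]
  rw [slope_def_field, hg0]
  rw [div_le_iff₀ (by simpa using ht.1)]
  have hgt : g t = polar F (x + t • v) := rfl
  nlinarith [hcv]

lemma polar_euler (hN : 0 < N) (hF_add : ∀ x y, F (x + y) ≤ F x + F y)
    (hF_smul : ∀ (a : ℝ) x, F (a • x) = |a| * F x)
    (hF_pos : ∀ x, x ≠ 0 → 0 < F x)
    {x : EuclideanSpace ℝ (Fin N)} {φ : EuclideanSpace ℝ (Fin N) →L[ℝ] ℝ}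
    (hd : HasFDerivAt (polar F) φ x) : φ x = polar F x := by
  have hline : HasDerivAt (fun t : ℝ => t • x) x 1 := by
    simpa using (hasDerivAt_id (1 : ℝ)).smul_const x
  have hcomp : HasDerivAt (fun t : ℝ => polar F (t • x)) (φ x) 1 :=
    hd.comp_hasDerivAt_of_eq 1 hline (by simp)
  have heq : (fun t : ℝ => polar F (t • x)) =ᶠ[nhds (1 : ℝ)] fun t => t * polar F x := by
    filter_upwards [Ioi_mem_nhds (zero_lt_one (α := ℝ))] with t ht
    rw [polar_smul hN hF_add hF_smul hF_pos, abs_of_pos ht]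
  have h2 : HasDerivAt (fun t : ℝ => polar F (t • x)) (polar F x) 1 := by
    have h3 : HasDerivAt (fun t : ℝ => t * polar F x) (polar F x) 1 := by
      simpa using (hasDerivAt_id (1 : ℝ)).mul_const (polar F x)
    exact h3.congr_of_eventuallyEq heq
  exact hcomp.unique h2

lemma F_dual_le_one (hN : 0 < N) (hF_add : ∀ x y, F (x + y) ≤ F x + F y)
    (hF_smul : ∀ (a : ℝ) x, F (a • x) = |a| * F x)
    (hF_pos : ∀ x, x ≠ 0 → 0 < F x)
    {z : EuclideanSpace ℝ (Fin N)} (h : ∀ v, (inner ℝ z v : ℝ) ≤ polar F v) :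
    F z ≤ 1 := by
  by_contra hz
  push_neg at hz
  have hzS : z ∉ {y : EuclideanSpace ℝ (Fin N) | F y ≤ 1} := fun h' => absurd h' (by
    simp only [Set.mem_setOf_eq]; linarith)
  have hconv : Convex ℝ {y : EuclideanSpace ℝ (Fin N) | F y ≤ 1} := by
    intro y₁ h1 y₂ h2 a b ha hb hab
    simp only [Set.mem_setOf_eq] at h1 h2 ⊢
    have hle := hF_add (a • y₁) (b • y₂)
    rw [hF_smul, hF_smul, abs_of_nonneg ha, abs_of_nonneg hb] at hle
    nlinarith
  have hclosed : IsClosed {y : EuclideanSpace ℝ (Fin N) | F y ≤ 1} :=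
    IsClosed.preimage (myF_continuous hF_add hF_smul) isClosed_Iic
  obtain ⟨f, u, hfu, huz⟩ := geometric_hahn_banach_closed_point hconv hclosed hzS
  set v := (InnerProductSpace.toDual ℝ (EuclideanSpace ℝ (Fin N))).symm f with hv
  have hfv : ∀ w, (inner ℝ v w : ℝ) = f w := fun w => InnerProductSpace.toDual_symm_apply
  have h1 : polar F v ≤ u := polar_le hF_smul fun y hy => by
    rw [hfv]; exact (hfu y hy).le
  have h3 : (inner ℝ z v : ℝ) = f z := by rw [real_inner_comm, hfv]
  have h2 := h v
  linarith

end Calc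

/-- The explicit barrier `u(x) = F°(x)^{−κ}`, `κ = (N−p)/(p−1)`, for the
anisotropic `p`-Laplace problem: pointwise formulas for its gradient, for
`F(∇u)`, a subgradient of `F` at `∇u`, and the identification of the flux
field `F^{p−1}(∇u) ∂F(∇u)` with the divergence-free field `−κ^{p−1} F°(y)^{−N} y`. -/
theorem p_capacitary_barrier {N : ℕ}
    (F : EuclideanSpace ℝ (Fin N) → ℝ)
    (hF_add : ∀ x y, F (x + y) ≤ F x + F y)
    (hF_smul : ∀ (a : ℝ) x, F (a • x) = |a| * F x)
    (hF_pos : ∀ x, x ≠ 0 → 0 < F x)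
    (p : ℝ) (hp : 1 < p) (hpN : p < N)
    (κ : ℝ) (hκ : κ = ((N : ℝ) - p) / (p - 1))
    (u : EuclideanSpace ℝ (Fin N) → ℝ)
    (hu : ∀ x, u x = polar F x ^ (-κ)) :
    ∀ x : EuclideanSpace ℝ (Fin N), x ≠ 0 → DifferentiableAt ℝ (polar F) x →
      -- (i) differentiability of u and formula for its gradient
      (DifferentiableAt ℝ u x ∧
        gradient u x = (-κ * polar F x ^ (-κ - 1)) • gradient (polar F) x) ∧
      -- (ii) F(∇u(x)) = κ F°(x)^{−(N−1)/(p−1)}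
      F (gradient u x) = κ * polar F x ^ (-(((N : ℝ) - 1) / (p - 1))) ∧
      -- (iii) −x/F°(x) is a subgradient of F at ∇u(x)
      (∀ w : EuclideanSpace ℝ (Fin N),
        F (gradient u x) + ⟪-((polar F x)⁻¹ • x), w - gradient u x⟫ ≤ F w) ∧
      -- (iv) the flux field F^{p−1}(∇u) ∂F(∇u) equals −κ^{p−1} F°(x)^{−N} x
      (F (gradient u x) ^ (p - 1)) • (-((polar F x)⁻¹ • x))
        = (-(κ ^ (p - 1))) • ((polar F x ^ (-(N : ℝ))) • x) := by
  intro x hx hdiff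
  have hN : 0 < N := by
    have h : (0:ℝ) < (N:ℝ) := lt_trans (lt_trans zero_lt_one hp) hpN
    exact_mod_cast h
  have hp1 : (0:ℝ) < p - 1 := by linarith
  have hκpos : 0 < κ := by rw [hκ]; exact div_pos (by linarith) hp1
  have hs : 0 < polar F x := polar_pos hN hF_add hF_smul hF_pos hx
  set s := polar F x with hs_def
  set φ := fderiv ℝ (polar F) x with hφ
  have hdF : HasFDerivAt (polar F) φ x := hdiff.hasFDerivAt
  set z := gradient (polar F) x with hz_def
  have hzφ : ∀ v, (inner ℝ z v : ℝ) = φ v := fun v => InnerProductSpace.toDual_symm_apply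
  have hEuler : (inner ℝ z x : ℝ) = s := by
    rw [hzφ]; exact polar_euler hN hF_add hF_smul hF_pos hdF
  have hzsub : ∀ v, (inner ℝ z v : ℝ) ≤ polar F v := by
    intro v
    have h1 := polar_subgrad hN hF_add hF_smul hF_pos hdF v
    have h2 := polar_add hN hF_add hF_smul hF_pos x v
    rw [hzφ]
    linarith
  have hFz_le : F z ≤ 1 := F_dual_le_one hN hF_add hF_smul hF_pos hzsub
  have hFz_ge : 1 ≤ F z := by
    have h := inner_le_polar_mul hN hF_add hF_smul hF_pos x z
    rw [real_inner_comm, hEuler] at h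
    nlinarith
  have hFz : F z = 1 := le_antisymm hFz_le hFz_ge
  set c : ℝ := -κ * s ^ (-κ - 1) with hc
  have hrpow : HasDerivAt (fun t : ℝ => t ^ (-κ)) (-κ * s ^ (-κ - 1)) s :=
    Real.hasDerivAt_rpow_const (Or.inl hs.ne')
  have huf : u = fun y => polar F y ^ (-κ) := funext hu
  have hufd : HasFDerivAt u (c • φ) x := by
    rw [huf]
    simpa [Function.comp_def, hc] using hrpow.comp_hasFDerivAt x hdF
  have hdiff_u : DifferentiableAt ℝ u x := hufd.differentiableAt
  have hgrad_u : gradient u x = c • z := by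
    have h1 : HasGradientAt u
        ((InnerProductSpace.toDual ℝ (EuclideanSpace ℝ (Fin N))).symm (c • φ)) x :=
      hufd.hasGradientAt
    rw [h1.gradient, map_smul]
    rfl
  have hspow : (0:ℝ) < s ^ (-κ - 1) := Real.rpow_pos_of_pos hs _
  have hFgu : F (gradient u x) = κ * s ^ (-κ - 1) := by
    rw [hgrad_u, hF_smul, hFz, mul_one, hc]
    have h : -κ * s ^ (-κ - 1) = -(κ * s ^ (-κ - 1)) := by ring
    rw [h, abs_neg, abs_of_nonneg (by positivity)]
  have hexp : -κ - 1 = -(((N:ℝ) - 1) / (p - 1)) := by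
    rw [hκ]; field_simp; ring
  refine ⟨⟨hdiff_u, hgrad_u⟩, ?_, ?_, ?_⟩
  · rw [hFgu, hexp]
  · intro w
    have hb : (inner ℝ ((-s⁻¹) • x) w : ℝ) ≤ polar F ((-s⁻¹) • x) * F w :=
      inner_le_polar_mul hN hF_add hF_smul hF_pos _ _
    have hps : polar F ((-s⁻¹) • x) = 1 := by
      rw [polar_smul hN hF_add hF_smul hF_pos, abs_neg, abs_inv, abs_of_pos hs, ← hs_def,
        inv_mul_cancel₀ hs.ne']
    rw [hps, one_mul, real_inner_smul_left] at hb
    have hsinv : s⁻¹ * s = 1 := inv_mul_cancel₀ hs.ne'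
    have hin : (inner ℝ (-(s⁻¹ • x)) (w - gradient u x) : ℝ) = -s⁻¹ * (inner ℝ x w : ℝ) + c := by
      rw [hgrad_u]
      simp only [inner_neg_left, inner_sub_right, real_inner_smul_left, real_inner_smul_right]
      have hxz : (inner ℝ x z : ℝ) = s := by rw [real_inner_comm]; exact hEuler
      rw [hxz]
      linear_combination c * hsinv
    rw [hin, hFgu, hc]
    linarith
  · have hm : F (gradient u x) ^ (p - 1) = κ ^ (p - 1) * s ^ (-((N:ℝ) - 1)) := by
      rw [hFgu, Real.mul_rpow hκpos.le hspow.le, ← Real.rpow_mul hs.le]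
      congr 1
      rw [hκ]; field_simp; ring_nf
    have hscal : κ ^ (p - 1) * s ^ (-((N:ℝ) - 1)) * s⁻¹ = κ ^ (p - 1) * s ^ (-(N:ℝ)) := by
      rw [← Real.rpow_neg_one s, mul_assoc, ← Real.rpow_add hs]
      have he : -((N:ℝ) - 1) + -1 = -(N:ℝ) := by ring
      rw [he]
    rw [hm, smul_neg, smul_smul, hscal]
    module
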